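/- Let G be the adjacency matrix of a connected undirected graph on a finite vertex set, with spectral radius λ_r, and let q be the Perron–Frobenius eigenvector of G (so q has all entries strictly positive). Let β, β', δ > 0 with βλ_r + β' < δ, and let x : [0,∞) → ℝ^V solve the linear ODE x'(t) = (βG + β'I − δI)x(t) with nonnegative initial condition x(0). Then qᵀx(t) = e^{t(βλ_r + β' − δ)}·qᵀx(0), and hence 1ᵀx(t) ≤ e^{t(βλ_r+β'−δ)}·(q_max/q_min)·1ᵀx(0), where q_max and q_min are the largest and smallest entries of q. -/

import Mathlib

open Matrix

section Aux

variable {V : Type*} [Fintype V] [DecidableEq V]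

private lemma pow_entry_nonneg (M : Matrix V V ℝ) (hM : ∀ i j, 0 ≤ M i j) :
    ∀ (n : ℕ) (i j : V), 0 ≤ (M ^ n) i j := by
  intro n
  induction n with
  | zero =>
    intro i j
    rw [pow_zero]
    by_cases h : i = j <;> simp [Matrix.one_apply, h]
  | succ n ih =>
    intro i j
    rw [pow_succ, Matrix.mul_apply]
    exact Finset.sum_nonneg fun k _ => mul_nonneg (ih i k) (hM k j)

private lemma exp_entry_nonneg (M : Matrix V V ℝ) (hM : ∀ i j, 0 ≤ M i j) (i j : V) :
    0 ≤ NormedSpace.exp M i j := by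
  letI : NormedRing (Matrix V V ℝ) := Matrix.linftyOpNormedRing
  letI : NormedAlgebra ℝ (Matrix V V ℝ) := Matrix.linftyOpNormedAlgebra
  have h1 : Summable (fun n : ℕ => ((n.factorial : ℝ))⁻¹ • M ^ n) :=
    NormedSpace.expSeries_summable' (𝕂 := ℝ) M
  have h2 : Summable (fun n : ℕ => (((n.factorial : ℝ))⁻¹ • M ^ n) i) :=
    Pi.summable.1 h1 i
  have h3 : NormedSpace.exp M i j = ∑' n : ℕ, (((n.factorial : ℝ))⁻¹ • M ^ n) i j := by
    rw [NormedSpace.exp_eq_tsum ℝ]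
    show (∑' n : ℕ, ((n.factorial : ℝ))⁻¹ • M ^ n) i j = _
    exact (congrFun (tsum_apply h1) j).trans (tsum_apply h2)
  rw [h3]
  refine tsum_nonneg fun n => ?_
  have : (((n.factorial : ℝ))⁻¹ • M ^ n) i j = ((n.factorial : ℝ))⁻¹ * (M ^ n) i j := rfl
  rw [this]
  exact mul_nonneg (by positivity) (pow_entry_nonneg M hM n i j)

private lemma hasDerivAt_exp_mulVec (A : Matrix V V ℝ) (x0 : V → ℝ) (t : ℝ) :
    HasDerivAt (fun s : ℝ => (NormedSpace.exp (s • A)).mulVec x0)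
      (A.mulVec ((NormedSpace.exp (t • A)).mulVec x0)) t := by
  letI : NormedRing (Matrix V V ℝ) := Matrix.linftyOpNormedRing
  letI : NormedAlgebra ℝ (Matrix V V ℝ) := Matrix.linftyOpNormedAlgebra
  have h1 : HasDerivAt (fun u : ℝ => NormedSpace.exp (u • A))
      (A * NormedSpace.exp (t • A)) t := hasDerivAt_exp_smul_const' (𝕂 := ℝ) A t
  let L : Matrix V V ℝ →ₗ[ℝ] (V → ℝ) :=
    { toFun := fun M => M.mulVec x0
      map_add' := fun M N => Matrix.add_mulVec M N x0
      map_smul' := fun c M => Matrix.smul_mulVec c M x0 }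
  have h2 := (LinearMap.toContinuousLinearMap L).hasFDerivAt.comp_hasDerivAt t h1
  have h3 : (LinearMap.toContinuousLinearMap L) (A * NormedSpace.exp (t • A))
      = A.mulVec ((NormedSpace.exp (t • A)).mulVec x0) := by
    show (A * NormedSpace.exp (t • A)).mulVec x0 = _
    rw [← Matrix.mulVec_mulVec]
  erw [h3] at h2
  exact h2

end Aux

/-- Evolution of the expected epidemic along the Perron eigendirection: if
`x' = (βG + β'I − δI)x` with `x(0) ≥ 0`, `G` the (symmetric) adjacency matrix of a
connected graph with Perron eigenvector `q ≻ 0` and spectral radius `λ_r`, then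
`qᵀx(t) = e^{t(βλ_r+β'−δ)}·qᵀx(0)` and
`1ᵀx(t) ≤ e^{t(βλ_r+β'−δ)}·(q_max/q_min)·1ᵀx(0)`. -/
theorem eigen_projection_decay
    {V : Type*} [Fintype V] [DecidableEq V] [Nonempty V]
    (G : Matrix V V ℝ) (hGsym : G.IsSymm) (hGadj : ∀ u v, G u v = 0 ∨ G u v = 1)
    (lamr : ℝ) (q : V → ℝ) (hq : ∀ v, 0 < q v) (heig : G.mulVec q = lamr • q)
    (β β' δ : ℝ) (hβ : 0 < β) (hβ' : 0 < β') (hδ : 0 < δ)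
    (hthr : β * lamr + β' < δ)
    (x : ℝ → V → ℝ) (hx0 : ∀ v, 0 ≤ x 0 v)
    (hode : ∀ t : ℝ, 0 ≤ t → ∀ v, HasDerivAt (fun s => x s v)
      ((β • G.mulVec (x t) + β' • x t - δ • x t) v) t) :
    ∀ t : ℝ, 0 ≤ t →
      dotProduct q (x t) =
        Real.exp (t * (β * lamr + β' - δ)) * dotProduct q (x 0) ∧
      ∑ v, x t v ≤ Real.exp (t * (β * lamr + β' - δ)) *
        ((Finset.univ.sup' Finset.univ_nonempty q) /
          (Finset.univ.inf' Finset.univ_nonempty q)) * ∑ v, x 0 v := by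
  classical
  set c : ℝ := β * lamr + β' - δ with hc
  -- derivative of the projection
  have hf' : ∀ t : ℝ, 0 ≤ t → HasDerivAt (fun s => dotProduct q (x s))
      (c * dotProduct q (x t)) t := by
    intro t ht
    have h1 : HasDerivAt (fun s => ∑ v, q v * x s v)
        (∑ v, q v * ((β • G.mulVec (x t) + β' • x t - δ • x t) v)) t :=
      HasDerivAt.fun_sum fun v _ => (hode t ht v).const_mul (q v)
    have key : dotProduct q (G.mulVec (x t)) = lamr * dotProduct q (x t) := by
      rw [Matrix.dotProduct_mulVec]
      have hv : Matrix.vecMul q G = lamr • q := by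
        conv_lhs => rw [← hGsym.eq]
        rw [Matrix.vecMul_transpose, heig]
      rw [hv, smul_dotProduct, smul_eq_mul]
    have h2 : (∑ v, q v * ((β • G.mulVec (x t) + β' • x t - δ • x t) v))
        = c * dotProduct q (x t) := by
      have hd : (∑ v, q v * ((β • G.mulVec (x t) + β' • x t - δ • x t) v))
          = dotProduct q (β • G.mulVec (x t) + β' • x t - δ • x t) := rfl
      rw [hd, dotProduct_sub, dotProduct_add, dotProduct_smul,
        dotProduct_smul, dotProduct_smul, smul_eq_mul, smul_eq_mul,
        smul_eq_mul, key, hc]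
      ring
    rw [h2] at h1
    exact h1
  -- the projection identity
  have hproj : ∀ t : ℝ, 0 ≤ t →
      dotProduct q (x t) = Real.exp (t * c) * dotProduct q (x 0) := by
    intro t ht
    have hder : ∀ s : ℝ, 0 ≤ s → HasDerivAt
        (fun u => Real.exp (-(c * u)) * dotProduct q (x u)) 0 s := by
      intro s hs
      have hlin : HasDerivAt (fun u : ℝ => -(c * u)) (-c) s := by
        simpa using ((hasDerivAt_id s).const_mul (-c))
      have hexp : HasDerivAt (fun u : ℝ => Real.exp (-(c * u)))
          (Real.exp (-(c * s)) * (-c)) s := hlin.exp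
      have := hexp.fun_mul (hf' s hs)
      refine this.congr_deriv ?_
      ring
    have hcst := constant_of_has_deriv_right_zero
      (f := fun u => Real.exp (-(c * u)) * dotProduct q (x u)) (a := 0) (b := t)
      (fun s hs => (hder s hs.1).continuousAt.continuousWithinAt)
      (fun s hs => (hder s hs.1).hasDerivWithinAt)
      t ⟨ht, le_refl t⟩
    simp only [mul_zero, neg_zero, Real.exp_zero, one_mul] at hcst
    have hpos := Real.exp_pos (-(c * t))
    have : dotProduct q (x t)
        = Real.exp (c * t) * (Real.exp (-(c * t)) * dotProduct q (x t)) := by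
      rw [← mul_assoc, ← Real.exp_add]
      simp
    rw [this, hcst, mul_comm c t]
  -- the matrix A and the representation of the solution
  set A : Matrix V V ℝ := β • G + (β' - δ) • (1 : Matrix V V ℝ) with hA
  have hAmul : ∀ y : V → ℝ, A.mulVec y = β • G.mulVec y + β' • y - δ • y := by
    intro y
    rw [hA, Matrix.add_mulVec, Matrix.smul_mulVec, Matrix.smul_mulVec,
      Matrix.one_mulVec, sub_smul]
    abel
  have hxd : ∀ t : ℝ, 0 ≤ t → HasDerivAt x (A.mulVec (x t)) t := by
    intro t ht
    rw [hAmul]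
    exact hasDerivAt_pi.2 fun v => hode t ht v
  set Aclm : (V → ℝ) →L[ℝ] (V → ℝ) := LinearMap.toContinuousLinearMap (Matrix.mulVecLin A)
    with hAclm
  have hAclm_eq : (fun y : V → ℝ => A.mulVec y) = ⇑Aclm := by
    ext y v
    simp [hAclm, Matrix.mulVecLin_apply]
  have hlip : ∀ _s : ℝ, LipschitzWith ‖Aclm‖₊ (fun y : V → ℝ => A.mulVec y) := by
    intro _s
    rw [hAclm_eq]
    exact Aclm.lipschitz
  have hrep : ∀ t : ℝ, 0 ≤ t → x t = (NormedSpace.exp (t • A)).mulVec (x 0) := by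
    intro t ht
    have hg : ∀ s : ℝ, HasDerivAt (fun u : ℝ => (NormedSpace.exp (u • A)).mulVec (x 0))
        (A.mulVec ((NormedSpace.exp (s • A)).mulVec (x 0))) s :=
      fun s => hasDerivAt_exp_mulVec A (x 0) s
    have h0 : x 0 = (NormedSpace.exp ((0 : ℝ) • A)).mulVec (x 0) := by
      rw [zero_smul, NormedSpace.exp_zero, Matrix.one_mulVec]
    exact ODE_solution_unique (v := fun _ y => A.mulVec y) (K := ‖Aclm‖₊)
      (f := x) (g := fun s => (NormedSpace.exp (s • A)).mulVec (x 0)) (a := 0) (b := t)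
      hlip
      (fun s hs => (hxd s hs.1).continuousAt.continuousWithinAt)
      (fun s hs => (hxd s hs.1).hasDerivWithinAt)
      (fun s _hs => (hg s).continuousAt.continuousWithinAt)
      (fun s _hs => (hg s).hasDerivWithinAt)
      h0 ⟨ht, le_refl t⟩
  -- nonnegativity of exp (t • A)
  have hexpnn : ∀ t : ℝ, 0 ≤ t → ∀ i j, 0 ≤ NormedSpace.exp (t • A) i j := by
    intro t ht i j
    letI : NormedRing (Matrix V V ℝ) := Matrix.linftyOpNormedRing
    letI : NormedAlgebra ℝ (Matrix V V ℝ) := Matrix.linftyOpNormedAlgebra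
    set B : Matrix V V ℝ := (t * β) • G with hB
    set d : ℝ := t * (β' - δ) with hd
    have hsplit : t • A = B + algebraMap ℝ (Matrix V V ℝ) d := by
      rw [Algebra.algebraMap_eq_smul_one, hA, smul_add, smul_smul, smul_smul, hB, hd]
    have hcomm : Commute B (algebraMap ℝ (Matrix V V ℝ) d) :=
      (Algebra.commutes d B).symm
    have hBnn : ∀ a b, 0 ≤ B a b := by
      intro a b
      have : 0 ≤ G a b := by rcases hGadj a b with h | h <;> rw [h] <;> norm_num
      have h1 : B a b = (t * β) * G a b := rfl
      rw [h1]
      exact mul_nonneg (mul_nonneg ht hβ.le) this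
    have hsum : NormedSpace.exp (t • A)
        = NormedSpace.exp B * algebraMap ℝ (Matrix V V ℝ) (Real.exp d) := by
      rw [hsplit, Matrix.exp_add_of_commute B _ hcomm, Real.exp_eq_exp_ℝ]
      exact congrArg _ (NormedSpace.algebraMap_exp_comm d).symm
    rw [hsum, Algebra.algebraMap_eq_smul_one, mul_smul_comm, mul_one]
    have : (Real.exp d • NormedSpace.exp B) i j = Real.exp d * NormedSpace.exp B i j := rfl
    rw [this]
    exact mul_nonneg (Real.exp_pos d).le (exp_entry_nonneg B hBnn i j)
  -- nonnegativity of the solution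
  have hxnn : ∀ t : ℝ, 0 ≤ t → ∀ v, 0 ≤ x t v := by
    intro t ht v
    rw [hrep t ht]
    exact Finset.sum_nonneg fun u _ =>
      mul_nonneg (hexpnn t ht v u) (hx0 u)
  -- final assembly
  intro t ht
  refine ⟨hproj t ht, ?_⟩
  set qmax := Finset.univ.sup' Finset.univ_nonempty q with hqmax
  set qmin := Finset.univ.inf' Finset.univ_nonempty q with hqmin
  have hqmin_pos : 0 < qmin := by
    obtain ⟨v, -, hv⟩ := Finset.exists_mem_eq_inf' (Finset.univ_nonempty (α := V)) q
    rw [hqmin, hv]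
    exact hq v
  have hqmin_le : ∀ v, qmin ≤ q v := fun v => Finset.inf'_le q (Finset.mem_univ v)
  have hqmax_ge : ∀ v, q v ≤ qmax := fun v => Finset.le_sup' q (Finset.mem_univ v)
  have step1 : ∑ v, x t v ≤ (1 / qmin) * dotProduct q (x t) := by
    have : dotProduct q (x t) = ∑ v, q v * x t v := rfl
    rw [this, Finset.mul_sum]
    refine Finset.sum_le_sum fun v _ => ?_
    have h1 : x t v ≤ (q v / qmin) * x t v := by
      have : (1 : ℝ) ≤ q v / qmin := (one_le_div hqmin_pos).2 (hqmin_le v)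
      nlinarith [hxnn t ht v]
    calc x t v ≤ (q v / qmin) * x t v := h1
      _ = 1 / qmin * (q v * x t v) := by ring
  have step2 : dotProduct q (x 0) ≤ qmax * ∑ v, x 0 v := by
    have : dotProduct q (x 0) = ∑ v, q v * x 0 v := rfl
    rw [this, Finset.mul_sum]
    exact Finset.sum_le_sum fun v _ => mul_le_mul_of_nonneg_right (hqmax_ge v) (hx0 v)
  calc ∑ v, x t v ≤ (1 / qmin) * dotProduct q (x t) := step1
    _ = (1 / qmin) * (Real.exp (t * c) * dotProduct q (x 0)) := by rw [hproj t ht]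
    _ ≤ (1 / qmin) * (Real.exp (t * c) * (qmax * ∑ v, x 0 v)) := by
        have h1 : 0 < Real.exp (t * c) := Real.exp_pos _
        have h2 : 0 ≤ 1 / qmin := by positivity
        exact mul_le_mul_of_nonneg_left
          (mul_le_mul_of_nonneg_left step2 h1.le) h2
    _ = Real.exp (t * c) * (qmax / qmin) * ∑ v, x 0 v := by ring
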